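/- arXiv:1208.3549 — 3 statements merged into one kernel-verified Lean document; each statement's English description precedes it below -/
import Mathlib

section
/- (Theorem 2, matrix form.) Let p, q, n be positive integers with p + q = n + 1, let N_p, N_q, N_b be natural numbers, and let A ∈ ℝ^{N_q×N_p} and B ∈ ℝ^{N_b×N_p} be arbitrary real matrices (representing the coboundary operator d^{n−p} and the trace operator tr^{n−p} of a simplicial complex). Set r = pq + 1, d_i = (−1)^q Aᵀ and d_b = (−1)^{q−1} Bᵀ. On the space (ℝ^{N_p}×ℝ^{N_q}×ℝ^{N_b}) × (ℝ^{N_p}×ℝ^{N_q}×ℝ^{N_b}) of flow–effort pairs ((f_p,f_q,f_b),(e_p,e_q,e_b)), define the symmetric bilinear form ⟪((f_p¹,f_q¹,f_b¹),(e_p¹,e_q¹,e_b¹)),((f_p²,f_q²,f_b²),(e_p²,e_q²,e_b²))⟫ = (e_p¹ᵀf_p² + e_p²ᵀf_p¹) + (−1)^{q(p−1)}(e_q¹ᵀf_q² + e_q²ᵀf_q¹) + (−1)^{(p−1)(q−1)}(e_b¹ᵀf_b² + e_b²ᵀf_b¹). Then the linear subspace D_d = { ((f_p,f_q,f_b),(e_p,e_q,e_b))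 : f_p = (−1)^r d_i e_q + (−1)^r d_b e_b, f_q = A e_p, f_b = (−1)^p B e_p } satisfies D_d = D_d^⊥, i.e., D_d is a Dirac structure with respect to this pairing. -/
open Matrix

/-- Flow–effort pairs ((f_p,f_q,f_b),(e_p,e_q,e_b)) on ℝ^{N_p}×ℝ^{N_q}×ℝ^{N_b}. -/
abbrev FlowEffort (Np Nq Nb : ℕ) :=
  ((Fin Np → ℝ) × (Fin Nq → ℝ) × (Fin Nb → ℝ)) ×
    ((Fin Np → ℝ) × (Fin Nq → ℝ) × (Fin Nb → ℝ))

/-- The symmetric bilinear pairing of Theorem 2 (simplicial Stokes–Dirac pairing),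
with the wedge-product reordering signs (−1)^{q(p−1)} and (−1)^{(p−1)(q−1)}. -/
def pairingD (p q : ℕ) {Np Nq Nb : ℕ} (z w : FlowEffort Np Nq Nb) : ℝ :=
  (z.2.1 ⬝ᵥ w.1.1 + w.2.1 ⬝ᵥ z.1.1)
    + (-1 : ℝ) ^ (q * (p - 1)) * (z.2.2.1 ⬝ᵥ w.1.2.1 + w.2.2.1 ⬝ᵥ z.1.2.1)
    + (-1 : ℝ) ^ ((p - 1) * (q - 1)) * (z.2.2.2 ⬝ᵥ w.1.2.2 + w.2.2.2 ⬝ᵥ z.1.2.2)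

/-- The simplicial Dirac structure D_d in matrix form: with r = pq+1,
d_i = (−1)^q Aᵀ and d_b = (−1)^{q−1} Bᵀ,
f_p = (−1)^r d_i e_q + (−1)^r d_b e_b, f_q = A e_p, f_b = (−1)^p B e_p. -/
def simplicialDirac (p q : ℕ) {Np Nq Nb : ℕ}
    (A : Matrix (Fin Nq) (Fin Np) ℝ) (B : Matrix (Fin Nb) (Fin Np) ℝ) :
    Set (FlowEffort Np Nq Nb) :=
  {z | z.1.1 = (-1 : ℝ) ^ (p * q + 1) • (((-1 : ℝ) ^ q • Aᵀ).mulVec z.2.2.1)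
          + (-1 : ℝ) ^ (p * q + 1) • (((-1 : ℝ) ^ (q - 1) • Bᵀ).mulVec z.2.2.2)
      ∧ z.1.2.1 = A.mulVec z.2.1
      ∧ z.1.2.2 = (-1 : ℝ) ^ p • B.mulVec z.2.1}

lemma negpow_add_eq_zero (a b : ℕ) (h : ¬ (Even a ↔ Even b)) : ((-1:ℝ))^a + (-1)^b = 0 := by
  rcases Nat.even_or_odd a with ha | ha <;> rcases Nat.even_or_odd b with hb | hb <;>
    first
      | exact absurd (iff_of_true ha hb) h
      | exact absurd (iff_of_false (Nat.not_even_iff_odd.2 ha) (Nat.not_even_iff_odd.2 hb)) h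
      | simp [ha.neg_one_pow, hb.neg_one_pow]

lemma dot_forall_zero {m : ℕ} (v : Fin m → ℝ) (h : ∀ x, v ⬝ᵥ x = 0) : v = 0 := by
  funext i
  have := h (Pi.single i 1)
  simpa using this

/-- Theorem 2, matrix form: the simplicial Dirac structure D_d equals its
orthogonal complement with respect to the pairing, i.e. it is a Dirac structure. -/
theorem simplicialDirac_is_dirac (p q n Np Nq Nb : ℕ)
    (hp : 0 < p) (hq : 0 < q) (hn : 0 < n) (hpq : p + q = n + 1)
    (A : Matrix (Fin Nq) (Fin Np) ℝ) (B : Matrix (Fin Nb) (Fin Np) ℝ) :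
    simplicialDirac p q A B =
      {z | ∀ w ∈ simplicialDirac p q A B, pairingD p q z w = 0} := by
  obtain ⟨p', rfl⟩ : ∃ p', p = p' + 1 := ⟨p - 1, (Nat.succ_pred_eq_of_pos hp).symm⟩
  obtain ⟨q', rfl⟩ : ∃ q', q = q' + 1 := ⟨q - 1, (Nat.succ_pred_eq_of_pos hq).symm⟩
  clear hp hq hn hpq
  set s1 : ℝ := (-1)^((q'+1)*((p'+1)-1)) with hs1d
  set s2 : ℝ := (-1)^(((p'+1)-1)*((q'+1)-1)) with hs2d
  set r : ℝ := (-1)^((p'+1)*(q'+1)+1) with hrd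
  set sq : ℝ := (-1)^(q'+1) with hsqd
  set sqm : ℝ := (-1)^((q'+1)-1) with hsqmd
  set sp : ℝ := (-1)^(p'+1) with hspd
  have hs1 : r * sq + s1 = 0 := by
    rw [hrd, hsqd, hs1d, ← pow_add]
    apply negpow_add_eq_zero
    simp [Nat.even_add, Nat.even_mul, Nat.even_add_one, ← Nat.not_even_iff_odd]
    tauto
  have hs2 : r * sqm + s2 * sp = 0 := by
    rw [hrd, hsqmd, hs2d, hspd, ← pow_add, ← pow_add]
    apply negpow_add_eq_zero
    simp [Nat.even_add, Nat.even_mul, Nat.even_add_one, ← Nat.not_even_iff_odd]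
    tauto
  have hs1ne : s1 ≠ 0 := by
    rw [hs1d]; exact pow_ne_zero _ (neg_ne_zero.2 one_ne_zero)
  have hs2ne : s2 ≠ 0 := by
    rw [hs2d]; exact pow_ne_zero _ (neg_ne_zero.2 one_ne_zero)
  -- key pairing identity for z arbitrary, w ∈ D with efforts (ep, eq, eb):
  have hpair : ∀ (z : FlowEffort Np Nq Nb) (ep eq eb),
      pairingD (p'+1) (q'+1) z
        ((r • ((sq • Aᵀ).mulVec eq) + r • ((sqm • Bᵀ).mulVec eb),
          A.mulVec ep, sp • B.mulVec ep), (ep, eq, eb))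
      = (z.1.1 + s1 • Aᵀ.mulVec z.2.2.1 + (s2*sp) • Bᵀ.mulVec z.2.2.2) ⬝ᵥ ep
        + s1 * ((z.1.2.1 - A.mulVec z.2.1) ⬝ᵥ eq)
        + s2 * ((z.1.2.2 - sp • B.mulVec z.2.1) ⬝ᵥ eb) := by
    intro z ep eq eb
    simp only [pairingD, Matrix.smul_mulVec, dotProduct_add, add_dotProduct,
      dotProduct_smul, smul_dotProduct, smul_eq_mul, Matrix.dotProduct_mulVec,
      Matrix.vecMul_transpose, sub_dotProduct, Matrix.mulVec_transpose]
    have c1 : z.2.2.1 ⬝ᵥ A.mulVec ep = z.2.2.1 ᵥ* A ⬝ᵥ ep := Matrix.dotProduct_mulVec _ _ _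
    have c2 : z.2.2.2 ⬝ᵥ B.mulVec ep = z.2.2.2 ᵥ* B ⬝ᵥ ep := Matrix.dotProduct_mulVec _ _ _
    have c3 : ep ⬝ᵥ z.1.1 = z.1.1 ⬝ᵥ ep := dotProduct_comm _ _
    have c4 : eq ⬝ᵥ z.1.2.1 = z.1.2.1 ⬝ᵥ eq := dotProduct_comm _ _
    have c5 : eb ⬝ᵥ z.1.2.2 = z.1.2.2 ⬝ᵥ eb := dotProduct_comm _ _
    have d1 : z.2.1 ⬝ᵥ eq ᵥ* A = A *ᵥ z.2.1 ⬝ᵥ eq := by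
      rw [dotProduct_comm, ← Matrix.dotProduct_mulVec, dotProduct_comm]
    have d2 : z.2.1 ⬝ᵥ eb ᵥ* B = B *ᵥ z.2.1 ⬝ᵥ eb := by
      rw [dotProduct_comm, ← Matrix.dotProduct_mulVec, dotProduct_comm]
    rw [c3, c4, c5, d1, d2]
    linear_combination ((A *ᵥ z.2.1) ⬝ᵥ eq) * hs1 + ((B *ᵥ z.2.1) ⬝ᵥ eb) * hs2
  ext z
  simp only [simplicialDirac, Set.mem_setOf_eq]
  constructor
  · rintro ⟨hz1, hz2, hz3⟩ w ⟨hw1, hw2, hw3⟩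
    obtain ⟨⟨fp, fq, fb⟩, ep, eq, eb⟩ := w
    simp only at hw1 hw2 hw3
    rw [hw1, hw2, hw3]
    rw [hpair z ep eq eb, hz2, hz3]
    have hz0 : z.1.1 + s1 • Aᵀ.mulVec z.2.2.1 + (s2*sp) • Bᵀ.mulVec z.2.2.2 = 0 := by
      rw [hz1]
      simp only [← hrd, ← hsqd, ← hsqmd, ← hspd, ← hs1d, ← hs2d]
      funext i
      simp only [Pi.add_apply, Pi.smul_apply, Pi.zero_apply, Matrix.smul_mulVec,
        smul_eq_mul]
      linear_combination ((Aᵀ.mulVec z.2.2.1) i) * hs1 + ((Bᵀ.mulVec z.2.2.2) i) * hs2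
    rw [hz0]
    simp [hspd]
  · intro hz
    have key : ∀ ep eq eb,
        (z.1.1 + s1 • Aᵀ.mulVec z.2.2.1 + (s2*sp) • Bᵀ.mulVec z.2.2.2) ⬝ᵥ ep
          + s1 * ((z.1.2.1 - A.mulVec z.2.1) ⬝ᵥ eq)
          + s2 * ((z.1.2.2 - sp • B.mulVec z.2.1) ⬝ᵥ eb) = 0 := by
      intro ep eq eb
      rw [← hpair z ep eq eb]
      exact hz _ ⟨rfl, rfl, rfl⟩
    have k1 : z.1.1 + s1 • Aᵀ.mulVec z.2.2.1 + (s2*sp) • Bᵀ.mulVec z.2.2.2 = 0 := by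
      apply dot_forall_zero
      intro x
      have := key x 0 0
      simpa using this
    have k2 : z.1.2.1 - A.mulVec z.2.1 = 0 := by
      apply dot_forall_zero
      intro x
      have := key 0 x 0
      simp only [dotProduct_zero, zero_dotProduct, mul_zero, add_zero, zero_add] at this
      exact (mul_eq_zero.mp this).resolve_left hs1ne
    have k3 : z.1.2.2 - sp • B.mulVec z.2.1 = 0 := by
      apply dot_forall_zero
      intro x
      have := key 0 0 x
      simp only [dotProduct_zero, zero_dotProduct, mul_zero, add_zero, zero_add] at this
      exact (mul_eq_zero.mp this).resolve_left hs2ne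
    refine ⟨?_, sub_eq_zero.mp k2, sub_eq_zero.mp k3⟩
    simp only [← hrd, ← hsqd, ← hsqmd, ← hspd, ← hs1d, ← hs2d]
    funext i
    have hk := congrFun k1 i
    simp only [Pi.add_apply, Pi.smul_apply, Pi.zero_apply, smul_eq_mul,
      Matrix.smul_mulVec] at hk ⊢
    linear_combination hk - ((Aᵀ.mulVec z.2.2.1) i) * hs1 - ((Bᵀ.mulVec z.2.2.2) i) * hs2
end

section
/- (Proposition on conservation laws.) Let p, q be positive integers, set ε = (−1)^{q(p+1)}, let A ∈ ℝ^{N_q×N_p} and B ∈ ℝ^{N_b×N_p} be real matrices, and let C : ℝ^{N_p} × ℝ^{N_q} → ℝ be continuously differentiable with partial gradients ∇₁C ∈ ℝ^{N_p}, ∇₂C ∈ ℝ^{N_q}. Call (x,z,u) a trajectory with Hamiltonian H if H : ℝ^{N_p}×ℝ^{N_q} → ℝ is continuously differentiable, u : I → ℝ^{N_b} is continuous on an interval I, and (x,z) : I → ℝ^{N_p}×ℝ^{N_q} is differentiable with x'(t) = ε Aᵀ ∇₂H(x(t),z(t)) − ε Bᵀ u(t) and z'(t) = −A ∇₁H(x(t),z(t)).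 Then the following are equivalent: (i) for every (a,b) ∈ ℝ^{N_p}×ℝ^{N_q}, A ∇₁C(a,b) = 0 and Aᵀ ∇₂C(a,b) = 0; (ii) for every continuously differentiable Hamiltonian H and every trajectory (x,z,u), d/dt C(x(t),z(t)) = ⟨f_b^C(t), u(t)⟩ for all t, where f_b^C(t) = −ε B ∇₁C(x(t),z(t)). -/
open Matrix

section Aux

variable {Np Nq : ℕ}

private noncomputable def linH (c1 : Fin Np → ℝ) (c2 : Fin Nq → ℝ) :
    ((Fin Np → ℝ) × (Fin Nq → ℝ)) →L[ℝ] ℝ :=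
  LinearMap.toContinuousLinearMap
    { toFun := fun y => c1 ⬝ᵥ y.1 + c2 ⬝ᵥ y.2
      map_add' := by intro a b; simp [dotProduct_add]; ring
      map_smul' := by intro m a; simp [dotProduct_smul]; ring }

private lemma linH_apply (c1 : Fin Np → ℝ) (c2 : Fin Nq → ℝ) (y) :
    linH c1 c2 y = c1 ⬝ᵥ y.1 + c2 ⬝ᵥ y.2 := rfl

private lemma chainRule (C : (Fin Np → ℝ) × (Fin Nq → ℝ) → ℝ)
    (gC1 : (Fin Np → ℝ) × (Fin Nq → ℝ) → Fin Np → ℝ)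
    (gC2 : (Fin Np → ℝ) × (Fin Nq → ℝ) → Fin Nq → ℝ)
    (hC : ContDiff ℝ 1 C)
    (hgC : ∀ y v, fderiv ℝ C y v = gC1 y ⬝ᵥ v.1 + gC2 y ⬝ᵥ v.2)
    (x : ℝ → Fin Np → ℝ) (z : ℝ → Fin Nq → ℝ) (x' : Fin Np → ℝ) (z' : Fin Nq → ℝ)
    (t : ℝ) (hx : HasDerivAt x x' t) (hz : HasDerivAt z z' t) :
    HasDerivAt (fun s => C (x s, z s))
      (gC1 (x t, z t) ⬝ᵥ x' + gC2 (x t, z t) ⬝ᵥ z') t := by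
  have h1 : HasDerivAt (fun s => (x s, z s)) (x', z') t := hx.prodMk hz
  have h2 : HasFDerivAt C (fderiv ℝ C (x t, z t)) (x t, z t) :=
    (hC.differentiable one_ne_zero (x t, z t)).hasFDerivAt
  have h3 := h2.comp_hasDerivAt t h1
  rw [hgC] at h3
  exact h3

end Aux

/-- proposition on conservation laws, matrix form: with ε = (−1)^{q(p+1)},
the kernel conditions A∇₁C = 0 and Aᵀ∇₂C = 0 (pointwise) hold iff along every trajectory
of the discretized port-Hamiltonian system, for every Hamiltonian H,
d/dt C(x,z) = ⟨f_b^C, u⟩ with f_b^C = −ε B ∇₁C. -/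
theorem conservation_law_characterization (p q Np Nq Nb : ℕ) (hp : 0 < p) (hq : 0 < q)
    (A : Matrix (Fin Nq) (Fin Np) ℝ) (B : Matrix (Fin Nb) (Fin Np) ℝ)
    (C : (Fin Np → ℝ) × (Fin Nq → ℝ) → ℝ)
    (gC1 : (Fin Np → ℝ) × (Fin Nq → ℝ) → Fin Np → ℝ)
    (gC2 : (Fin Np → ℝ) × (Fin Nq → ℝ) → Fin Nq → ℝ)
    (hC : ContDiff ℝ 1 C)
    (hgC : ∀ y v, fderiv ℝ C y v = gC1 y ⬝ᵥ v.1 + gC2 y ⬝ᵥ v.2) :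
    (∀ a : Fin Np → ℝ, ∀ b : Fin Nq → ℝ,
        A.mulVec (gC1 (a, b)) = 0 ∧ Aᵀ.mulVec (gC2 (a, b)) = 0)
      ↔
    (∀ (H : (Fin Np → ℝ) × (Fin Nq → ℝ) → ℝ)
        (gH1 : (Fin Np → ℝ) × (Fin Nq → ℝ) → Fin Np → ℝ)
        (gH2 : (Fin Np → ℝ) × (Fin Nq → ℝ) → Fin Nq → ℝ),
        ContDiff ℝ 1 H →
        (∀ y v, fderiv ℝ H y v = gH1 y ⬝ᵥ v.1 + gH2 y ⬝ᵥ v.2) →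
        ∀ (I : Set ℝ), I.OrdConnected →
        ∀ (u : ℝ → Fin Nb → ℝ) (x : ℝ → Fin Np → ℝ) (z : ℝ → Fin Nq → ℝ),
          ContinuousOn u I →
          (∀ t ∈ I, HasDerivAt x
            ((-1 : ℝ) ^ (q * (p + 1)) • Aᵀ.mulVec (gH2 (x t, z t))
              - (-1 : ℝ) ^ (q * (p + 1)) • Bᵀ.mulVec (u t)) t) →
          (∀ t ∈ I, HasDerivAt z (-(A.mulVec (gH1 (x t, z t)))) t) →
          ∀ t ∈ I, HasDerivAt (fun s => C (x s, z s))
            ((-((-1 : ℝ) ^ (q * (p + 1)) • B.mulVec (gC1 (x t, z t)))) ⬝ᵥ u t) t) := by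
  set ε : ℝ := (-1 : ℝ) ^ (q * (p + 1)) with hε
  constructor
  · intro hker H gH1 gH2 _ _ I _ u x z _ hx hz t ht
    have key := chainRule C gC1 gC2 hC hgC x z _ _ t (hx t ht) (hz t ht)
    convert key using 1
    obtain ⟨h1, h2⟩ := hker (x t) (z t)
    have e1 : gC1 (x t, z t) ⬝ᵥ (Aᵀ *ᵥ gH2 (x t, z t)) = 0 := by
      rw [dotProduct_mulVec, vecMul_transpose, h1, zero_dotProduct]
    have e2 : gC2 (x t, z t) ⬝ᵥ (A *ᵥ gH1 (x t, z t)) = 0 := by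
      rw [dotProduct_mulVec, ← mulVec_transpose, h2, zero_dotProduct]
    have e3 : gC1 (x t, z t) ⬝ᵥ (Bᵀ *ᵥ u t) = (B *ᵥ gC1 (x t, z t)) ⬝ᵥ u t := by
      rw [dotProduct_mulVec, vecMul_transpose]
    simp [dotProduct_sub, dotProduct_smul, dotProduct_neg, neg_dotProduct,
      smul_dotProduct, e1, e2, e3]
  · intro hbal a b
    have main : ∀ (c1 : Fin Np → ℝ) (c2 : Fin Nq → ℝ),
        gC1 (a, b) ⬝ᵥ (ε • Aᵀ.mulVec c2) + gC2 (a, b) ⬝ᵥ (-(A.mulVec c1)) = 0 := by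
      intro c1 c2
      set L := linH c1 c2
      have hL : ∀ y v, fderiv ℝ (fun y => L y) y v = c1 ⬝ᵥ v.1 + c2 ⬝ᵥ v.2 := by
        intro y v
        rw [L.fderiv]
        rfl
      set v1 : Fin Np → ℝ := ε • Aᵀ.mulVec c2 with hv1
      set v2 : Fin Nq → ℝ := -(A.mulVec c1) with hv2
      have hx : ∀ t : ℝ, HasDerivAt (fun s : ℝ => a + s • v1) v1 t := by
        intro t
        simpa using ((hasDerivAt_id t).smul_const v1).const_add a
      have hz : ∀ t : ℝ, HasDerivAt (fun s : ℝ => b + s • v2) v2 t := by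
        intro t
        simpa using ((hasDerivAt_id t).smul_const v2).const_add b
      have hbal' := hbal (fun y => L y) (fun _ => c1) (fun _ => c2) L.contDiff hL
        Set.univ Set.ordConnected_univ (fun _ => 0)
        (fun s => a + s • v1) (fun s => b + s • v2) continuousOn_const
        (fun t _ => by simpa using hx t) (fun t _ => hz t) 0 trivial
      have key := chainRule C gC1 gC2 hC hgC (fun s => a + s • v1) (fun s => b + s • v2)
        v1 v2 0 (hx 0) (hz 0)
      have := hbal'.unique key
      simp only [show a + (0:ℝ) • v1 = a by simp, show b + (0:ℝ) • v2 = b by simp] at this ⊢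
      rw [dotProduct_zero] at this
      rw [← this]
    have hε0 : ε ≠ 0 := pow_ne_zero _ (by norm_num)
    constructor
    · have h := main 0 (A.mulVec (gC1 (a, b)))
      rw [Matrix.mulVec_zero, neg_zero, dotProduct_zero, add_zero,
        dotProduct_smul, dotProduct_mulVec, vecMul_transpose] at h
      rw [smul_eq_mul, mul_eq_zero] at h
      rcases h with h | h
      · exact absurd h hε0
      · exact dotProduct_self_eq_zero.mp h
    · have h := main (Aᵀ.mulVec (gC2 (a, b))) 0
      rw [Matrix.mulVec_zero, smul_zero, dotProduct_zero, zero_add,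
        dotProduct_neg, dotProduct_mulVec, ← mulVec_transpose, neg_eq_zero] at h
      exact dotProduct_self_eq_zero.mp h
end

section
/- (Total charge balance of the discretized transmission line with current inputs.) Let m ≥ 1, let D ∈ ℝ^{m×(m+1)} be the difference matrix with D_{i,i} = −1, D_{i,i+1} = 1 and all other entries zero, and let T ∈ ℝ^{2×(m+1)} be the matrix with T_{1,1} = −1, T_{2,m+1} = 1 and all other entries zero. Let I_cur : I → ℝ^m and e : I → ℝ² be continuous, and let q : I → ℝ^{m+1} be differentiable with q'(t) = Dᵀ I_cur(t) − Tᵀ e(t). Then the total charge C_q(t) = Σ_{i=1}^{m+1} q_i(t) satisfies d/dt C_q(t) = e₁(t) − e₂(t) for all t ∈ I. -/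
open Matrix

/-- The difference matrix D ∈ ℝ^{m×(m+1)}: D_{i,i} = −1, D_{i,i+1} = 1, else 0. -/
def diffMat (m : ℕ) : Matrix (Fin m) (Fin (m + 1)) ℝ :=
  Matrix.of fun i j => if j = i.castSucc then -1 else if j = i.succ then 1 else 0

/-- The boundary trace matrix T ∈ ℝ^{2×(m+1)}: T_{1,1} = −1, T_{2,m+1} = 1, else 0. -/
def trMat (m : ℕ) : Matrix (Fin 2) (Fin (m + 1)) ℝ :=
  Matrix.of fun i j =>
    if i = 0 ∧ j = 0 then -1 else if i = 1 ∧ j = Fin.last m then 1 else 0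

/-- total charge balance of the discretized transmission line with
current inputs: if q' = Dᵀ I_cur − Tᵀ e, then the total charge C_q = Σᵢ qᵢ
satisfies d/dt C_q = e₁ − e₂. -/
theorem total_charge_balance (m : ℕ) (hm : 1 ≤ m)
    (I : Set ℝ) (hI : I.OrdConnected)
    (Icur : ℝ → Fin m → ℝ) (hIcur : ContinuousOn Icur I)
    (e : ℝ → Fin 2 → ℝ) (he : ContinuousOn e I)
    (q : ℝ → Fin (m + 1) → ℝ)
    (hq : ∀ t ∈ I, HasDerivAt q
      ((diffMat m)ᵀ.mulVec (Icur t) - (trMat m)ᵀ.mulVec (e t)) t) :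
    ∀ t ∈ I, HasDerivAt (fun s => ∑ i, q s i) (e t 0 - e t 1) t := by
  intro t ht
  have h := hasDerivAt_pi.mp (hq t ht)
  have hsum := HasDerivAt.fun_sum (fun i (_ : i ∈ Finset.univ) => h i)
  convert hsum using 1 <;> try rfl
  simp only [Pi.sub_apply, Finset.sum_sub_distrib, mulVec, dotProduct, transpose_apply,
    diffMat, trMat, of_apply]
  rw [Finset.sum_comm, Finset.sum_comm (s := Finset.univ) (t := Finset.univ)
    (f := fun j i => (if (i : Fin 2) = 0 ∧ j = 0 then (-1:ℝ) else if i = 1 ∧ j = Fin.last m then 1 else 0) * e t i)]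
  have h1 : ∀ i : Fin m, ∑ j : Fin (m+1),
      (if j = i.castSucc then (-1:ℝ) else if j = i.succ then 1 else 0) * Icur t i = 0 := by
    intro i
    rw [← Finset.sum_mul]
    have : ∑ j : Fin (m+1), (if j = i.castSucc then (-1:ℝ) else if j = i.succ then 1 else 0)
        = ∑ j : Fin (m+1), ((if j = i.succ then (1:ℝ) else 0) + (if j = i.castSucc then -1 else 0)) := by
      apply Finset.sum_congr rfl
      intro j _
      rcases eq_or_ne j i.castSucc with hc | hc
      · simp [hc, (Fin.castSucc_lt_succ (i := i)).ne]
      · simp [hc]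
    rw [this, Finset.sum_add_distrib]
    simp
  have h2 : ∀ i : Fin 2, ∑ j : Fin (m+1),
      (if i = 0 ∧ j = 0 then (-1:ℝ) else if i = 1 ∧ j = Fin.last m then 1 else 0) * e t i
      = (if i = 0 then -e t i else e t i) := by
    intro i
    fin_cases i <;> simp [Finset.sum_ite_eq']
  simp only [Finset.sum_congr rfl (fun i _ => h1 i), Finset.sum_congr rfl (fun i _ => h2 i)]
  simp [Fin.sum_univ_two]
  ring
end
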